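/- Fix reals λ > 0, β > 0, λ₁ > 0. Define p̂₀^E(t) = exp(-β λ₁ t/(λ₁+λ)) and, for integers k ≥ 1, p̂_k^E(t) = e^{-β t} (λ₁^k λ β t/(λ₁+λ)^{k+1}) E^{k+1}_{1,2}(λ β t/(λ₁+λ)); define p_k^I(t) = e^{-β t} (λ λ₁^k (k+1)/(λ₁+λ)^{k+1}) E^{k+1}_{1,1}(λ β t/(λ₁+λ)) for k ≥ 0. Then for every integer k ≥ 0 and every t > 0, d/dt p̂_k^E(t) = -β p̂_k^E(t) + (β/(k+1)) p_k^I(t). -/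

import Mathlib

open Real MeasureTheory Filter Finset

/-- Wright function `Φ(ρ, δ, z) = Σ_{j≥0} z^j / (j! Γ(ρ j + δ))`. -/
noncomputable def wright (ρ δ z : ℝ) : ℝ :=
  ∑' j : ℕ, z ^ j / ((Nat.factorial j : ℝ) * Real.Gamma (ρ * (j : ℝ) + δ))

/-- Wright function with second parameter 0:
`Φ(ρ, 0, z) = Σ_{j≥1} z^j / (j! Γ(ρ j))`. -/
noncomputable def wright0 (ρ z : ℝ) : ℝ :=
  ∑' j : ℕ, z ^ (j + 1) /
    ((Nat.factorial (j + 1) : ℝ) * Real.Gamma (ρ * ((j : ℝ) + 1)))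

/-- Two-parameter Mittag-Leffler function `E_{ρ,δ}(z) = Σ_{j≥0} z^j / Γ(ρ j + δ)`. -/
noncomputable def ml2 (ρ δ z : ℝ) : ℝ :=
  ∑' j : ℕ, z ^ j / Real.Gamma (ρ * (j : ℝ) + δ)

/-- Three-parameter generalized Mittag-Leffler function
`E^γ_{ρ,δ}(z) = Σ_{j≥0} (Γ(γ+j)/Γ(γ)) z^j / (j! Γ(ρ j + δ))`. -/
noncomputable def ml3 (γ ρ δ z : ℝ) : ℝ :=
  ∑' j : ℕ, (Real.Gamma (γ + (j : ℝ)) / Real.Gamma γ) * z ^ j /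
    ((Nat.factorial j : ℝ) * Real.Gamma (ρ * (j : ℝ) + δ))

/-- Modified Bessel function of the first kind of order 0:
`I₀(z) = Σ_{j≥0} (z/2)^{2j} / (j!)²`. -/
noncomputable def besselI0 (z : ℝ) : ℝ :=
  ∑' j : ℕ, (z / 2) ^ (2 * j) / ((Nat.factorial j : ℝ) * (Nat.factorial j : ℝ))

open scoped Topology in
private lemma choose_le_two_pow' (n k : ℕ) : n.choose k ≤ 2 ^ n := by
  rcases le_or_gt k n with h | h
  · calc n.choose k ≤ ∑ i ∈ Finset.range (n + 1), n.choose i :=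
        Finset.single_le_sum (fun i _ => Nat.zero_le _)
          (Finset.mem_range.2 (Nat.lt_succ_of_le h))
    _ = 2 ^ n := Nat.sum_range_choose n
  · simp [Nat.choose_eq_zero_of_lt h]

open scoped Topology in
/-- Term-by-term differentiation of an entire power series. -/
private lemma hasDerivAt_tsum_pow (c : ℕ → ℝ)
    (hc : ∀ r : ℝ, 0 ≤ r → Summable fun n => |c n| * r ^ n) (x : ℝ) :
    HasDerivAt (fun y : ℝ => ∑' n : ℕ, c n * y ^ n)
      (∑' n : ℕ, ((n : ℝ) + 1) * c (n + 1) * x ^ n) x := by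
  set R : ℝ := |x| + 1 with hRdef
  have hR1 : (1 : ℝ) ≤ R := by
    have := abs_nonneg x; simp only [hRdef]; linarith
  have hxR : x ∈ Metric.ball (0 : ℝ) R := by
    simp only [Metric.mem_ball, Real.dist_eq, sub_zero, hRdef]
    linarith
  have hu : Summable fun n => |c n| * (2 * R) ^ n := hc _ (by positivity)
  have hbound : ∀ (n : ℕ), ∀ y ∈ Metric.ball (0 : ℝ) R,
      ‖(n : ℝ) * c n * y ^ (n - 1)‖ ≤ |c n| * (2 * R) ^ n := by
    intro n y hy
    have hyR : |y| ≤ R := by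
      have : dist y 0 < R := hy
      rw [Real.dist_eq, sub_zero] at this
      exact this.le
    have h1 : ‖(n : ℝ) * c n * y ^ (n - 1)‖ = (n : ℝ) * |c n| * |y| ^ (n - 1) := by
      simp [abs_mul, abs_pow, Nat.abs_cast]
    rw [h1]
    have h2 : |y| ^ (n - 1) ≤ R ^ n :=
      (pow_le_pow_left₀ (abs_nonneg y) hyR _).trans
        (pow_le_pow_right₀ hR1 (Nat.sub_le n 1))
    have h3 : (n : ℝ) ≤ 2 ^ n := by exact_mod_cast (Nat.lt_two_pow_self (n := n)).le
    calc (n : ℝ) * |c n| * |y| ^ (n - 1)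
        ≤ 2 ^ n * |c n| * R ^ n := by
          have hy0 : (0:ℝ) ≤ |y| ^ (n-1) := by positivity
          have hnc : (0:ℝ) ≤ (n : ℝ) * |c n| := by positivity
          have hstep : (n : ℝ) * |c n| ≤ 2 ^ n * |c n| :=
            mul_le_mul_of_nonneg_right h3 (abs_nonneg _)
          exact mul_le_mul hstep h2 hy0 (by positivity)
    _ = |c n| * (2 * R) ^ n := by rw [mul_pow]; ring
  have hder : ∀ᶠ N in atTop, ∀ y : ℝ, y ∈ Metric.ball (0 : ℝ) R →
      HasDerivAt (fun z : ℝ => ∑ n ∈ Finset.range N, c n * z ^ n)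
        (∑ n ∈ Finset.range N, (n : ℝ) * c n * y ^ (n - 1)) y := by
    refine Filter.Eventually.of_forall fun N y _ => ?_
    refine HasDerivAt.fun_sum fun i _ => ?_
    have := (hasDerivAt_pow i y).const_mul (c i)
    exact this.congr_deriv (by ring)
  have hpt : ∀ y : ℝ, y ∈ Metric.ball (0 : ℝ) R →
      Tendsto (fun N => ∑ n ∈ Finset.range N, c n * y ^ n) atTop
        (𝓝 (∑' n : ℕ, c n * y ^ n)) := by
    intro y _
    have hs : Summable fun n : ℕ => c n * y ^ n := by
      apply Summable.of_norm
      have heq : (fun n : ℕ => ‖c n * y ^ n‖) = fun n => |c n| * |y| ^ n := by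
        funext n; simp [abs_mul, abs_pow]
      rw [heq]
      exact hc _ (abs_nonneg y)
    exact hs.hasSum.tendsto_sum_nat
  have main := hasDerivAt_of_tendstoUniformlyOn Metric.isOpen_ball
    (tendstoUniformlyOn_tsum_nat hu hbound) hder hpt hxR
  have hs' : Summable fun n : ℕ => (n : ℝ) * c n * x ^ (n - 1) :=
    Summable.of_norm_bounded hu fun n => hbound n x hxR
  refine main.congr_deriv (Eq.symm ?_)
  conv_rhs => rw [Summable.tsum_eq_zero_add hs']
  simp only [Nat.cast_zero, zero_mul, zero_add, Nat.cast_add, Nat.cast_one,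
    Nat.add_sub_cancel]

/-- Coefficients of the power series `t ↦ t·E^{k+1}_{1,2}(a t)` scaled by `C`. -/
private noncomputable def mlc (k : ℕ) (C a : ℝ) : ℕ → ℝ
  | 0 => 0
  | j + 1 => C * a ^ j * ((k + j).factorial : ℝ) /
      ((k.factorial : ℝ) * ((j.factorial : ℝ) * ((j + 1).factorial : ℝ)))

private lemma summable_mlc (k : ℕ) (C a : ℝ) (ha : 0 ≤ a) (r : ℝ) (hr : 0 ≤ r) :
    Summable fun n => |mlc k C a n| * r ^ n := by
  rw [← summable_nat_add_iff 1]
  have key : ∀ j : ℕ, |mlc k C a (j + 1)| * r ^ (j + 1) ≤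
      (|C| * r * 2 ^ k) * ((2 * a * r) ^ j / (j.factorial : ℝ)) := by
    intro j
    have hkf : (0:ℝ) < (k.factorial : ℝ) := by exact_mod_cast k.factorial_pos
    have hjf : (0:ℝ) < (j.factorial : ℝ) := by exact_mod_cast j.factorial_pos
    have hj1f : (0:ℝ) < ((j+1).factorial : ℝ) := by exact_mod_cast (j+1).factorial_pos
    have hfac : ((k + j).factorial : ℝ) ≤ 2 ^ (k + j) * (k.factorial : ℝ) * (j.factorial : ℝ) := by
      have h1 : ((k + j).factorial : ℝ)
          = ((k + j).choose j : ℝ) * (k.factorial : ℝ) * (j.factorial : ℝ) := by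
        exact_mod_cast congrArg (Nat.cast (R := ℝ))
          (Nat.add_choose_mul_factorial_mul_factorial k j).symm
      have h2 : ((k + j).choose j : ℝ) ≤ 2 ^ (k + j) := by
        exact_mod_cast choose_le_two_pow' (k + j) j
      rw [h1]
      have := mul_le_mul_of_nonneg_right
        (mul_le_mul_of_nonneg_right h2 hkf.le) hjf.le
      exact this
    have habs : |mlc k C a (j + 1)| = |C| * a ^ j * ((k + j).factorial : ℝ) /
        ((k.factorial : ℝ) * ((j.factorial : ℝ) * ((j + 1).factorial : ℝ))) := by
      simp [mlc, abs_div, abs_mul, abs_pow, abs_of_nonneg ha, Nat.abs_cast]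
    rw [habs]
    have hQ : ((k + j).factorial : ℝ) /
        ((k.factorial : ℝ) * ((j.factorial : ℝ) * ((j + 1).factorial : ℝ)))
        ≤ 2 ^ (k + j) / (j.factorial : ℝ) := by
      rw [div_le_div_iff₀ (by positivity) hjf]
      have hjj : (j.factorial : ℝ) ≤ ((j + 1).factorial : ℝ) := by
        exact_mod_cast Nat.factorial_le (Nat.le_succ j)
      calc ((k + j).factorial : ℝ) * (j.factorial : ℝ)
          ≤ (2 ^ (k + j) * (k.factorial : ℝ) * (j.factorial : ℝ)) * (j.factorial : ℝ) :=
            mul_le_mul_of_nonneg_right hfac hjf.le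
        _ ≤ 2 ^ (k + j) * ((k.factorial : ℝ) * ((j.factorial : ℝ) * ((j + 1).factorial : ℝ))) := by
            nlinarith [pow_pos (show (0:ℝ) < 2 by norm_num) (k + j)]
    calc |C| * a ^ j * ((k + j).factorial : ℝ) /
        ((k.factorial : ℝ) * ((j.factorial : ℝ) * ((j + 1).factorial : ℝ))) * r ^ (j + 1)
        = (|C| * a ^ j * r ^ (j + 1)) * (((k + j).factorial : ℝ) /
            ((k.factorial : ℝ) * ((j.factorial : ℝ) * ((j + 1).factorial : ℝ)))) := by ring
      _ ≤ (|C| * a ^ j * r ^ (j + 1)) * (2 ^ (k + j) / (j.factorial : ℝ)) := by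
          apply mul_le_mul_of_nonneg_left hQ (by positivity)
      _ = (|C| * r * 2 ^ k) * ((2 * a * r) ^ j / (j.factorial : ℝ)) := by
          rw [pow_add, mul_pow, mul_pow, pow_succ]
          field_simp
          ring
  apply Summable.of_nonneg_of_le (fun j => by positivity) key
  exact ((Real.summable_pow_div_factorial (2 * a * r)).mul_left _)

private lemma Gamma_nat_add' (k j : ℕ) :
    Real.Gamma ((k : ℝ) + 1 + (j : ℝ)) = ((k + j).factorial : ℝ) := by
  have h : (k : ℝ) + 1 + (j : ℝ) = ((k + j : ℕ) : ℝ) + 1 := by push_cast; ring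
  rw [h, Real.Gamma_nat_eq_factorial]

private lemma tsum_mlc_eq (k : ℕ) (C a y : ℝ) (ha : 0 ≤ a) :
    ∑' n : ℕ, mlc k C a n * y ^ n = C * y * ml3 ((k : ℝ) + 1) 1 2 (a * y) := by
  have hsum : Summable fun n : ℕ => mlc k C a n * y ^ n := by
    apply Summable.of_norm
    have heq : (fun n : ℕ => ‖mlc k C a n * y ^ n‖) = fun n => |mlc k C a n| * |y| ^ n := by
      funext n; simp [abs_mul, abs_pow]
    rw [heq]
    exact summable_mlc k C a ha _ (abs_nonneg y)
  rw [Summable.tsum_eq_zero_add hsum]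
  simp only [mlc, zero_mul, zero_add]
  unfold ml3
  rw [← tsum_mul_left]
  apply tsum_congr
  intro j
  have h1 := Gamma_nat_add' k j
  have h2 : Real.Gamma ((k : ℝ) + 1) = (k.factorial : ℝ) := Real.Gamma_nat_eq_factorial k
  have h3 : Real.Gamma (1 * (j : ℝ) + 2) = ((j + 1).factorial : ℝ) := by
    have h : 1 * (j : ℝ) + 2 = ((j + 1 : ℕ) : ℝ) + 1 := by push_cast; ring
    rw [h, Real.Gamma_nat_eq_factorial]
  rw [h1, h2, h3]
  have hkf : ((k.factorial : ℝ)) ≠ 0 := by exact_mod_cast k.factorial_ne_zero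
  have hjf : ((j.factorial : ℝ)) ≠ 0 := by exact_mod_cast j.factorial_ne_zero
  have hj1f : (((j + 1).factorial : ℝ)) ≠ 0 := by exact_mod_cast (j + 1).factorial_ne_zero
  rw [mul_pow]
  field_simp
  ring

private lemma tsum_mlc_deriv_eq (k : ℕ) (C a y : ℝ) :
    ∑' n : ℕ, ((n : ℝ) + 1) * mlc k C a (n + 1) * y ^ n
      = C * ml3 ((k : ℝ) + 1) 1 1 (a * y) := by
  unfold ml3
  rw [← tsum_mul_left]
  apply tsum_congr
  intro j
  simp only [mlc]
  have h1 := Gamma_nat_add' k j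
  have h2 : Real.Gamma ((k : ℝ) + 1) = (k.factorial : ℝ) := Real.Gamma_nat_eq_factorial k
  have h3 : Real.Gamma (1 * (j : ℝ) + 1) = (j.factorial : ℝ) := by
    have h : 1 * (j : ℝ) + 1 = (j : ℝ) + 1 := by ring
    rw [h, Real.Gamma_nat_eq_factorial]
  have h4 : (((j + 1).factorial : ℝ)) = ((j : ℝ) + 1) * (j.factorial : ℝ) := by
    rw [Nat.factorial_succ]; push_cast; ring
  rw [h1, h2, h3, h4]
  have hkf : ((k.factorial : ℝ)) ≠ 0 := by exact_mod_cast k.factorial_ne_zero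
  have hjf : ((j.factorial : ℝ)) ≠ 0 := by exact_mod_cast j.factorial_ne_zero
  have hj1 : ((j : ℝ) + 1) ≠ 0 := by positivity
  rw [mul_pow]
  field_simp

private lemma aux_deriv (lam β lam1 : ℝ) (hlam : 0 < lam) (hβ : 0 < β) (hlam1 : 0 < lam1)
    (k : ℕ) (t : ℝ) :
    HasDerivAt (fun y : ℝ => Real.exp (-(β * y)) *
        (lam1 ^ k * lam * β * y / (lam1 + lam) ^ (k + 1)) *
        ml3 ((k : ℝ) + 1) 1 2 (lam * β * y / (lam1 + lam)))
      (-β * (Real.exp (-(β * t)) *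
          (lam1 ^ k * lam * β * t / (lam1 + lam) ^ (k + 1)) *
          ml3 ((k : ℝ) + 1) 1 2 (lam * β * t / (lam1 + lam)))
        + β / ((k : ℝ) + 1) * (Real.exp (-(β * t)) *
          (lam * lam1 ^ k * ((k : ℝ) + 1) / (lam1 + lam) ^ (k + 1)) *
          ml3 ((k : ℝ) + 1) 1 1 (lam * β * t / (lam1 + lam)))) t := by
  have hΛ : (0 : ℝ) < lam1 + lam := by positivity
  set a : ℝ := lam * β / (lam1 + lam) with hadef
  have ha : 0 < a := by positivity
  set C : ℝ := lam1 ^ k * lam * β / (lam1 + lam) ^ (k + 1) with hCdef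
  have hC : 0 < C := by positivity
  have hfun : ∀ y : ℝ, Real.exp (-(β * y)) *
      (lam1 ^ k * lam * β * y / (lam1 + lam) ^ (k + 1)) *
      ml3 ((k : ℝ) + 1) 1 2 (lam * β * y / (lam1 + lam))
      = Real.exp (-(β * y)) * ∑' n : ℕ, mlc k C a n * y ^ n := by
    intro y
    rw [tsum_mlc_eq k C a y ha.le]
    have h1 : lam * β * y / (lam1 + lam) = a * y := by rw [hadef]; ring
    have h2 : lam1 ^ k * lam * β * y / (lam1 + lam) ^ (k + 1) = C * y := by
      rw [hCdef]; ring
    rw [h1, h2, mul_assoc]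
  have hexp : HasDerivAt (fun y : ℝ => Real.exp (-(β * y))) (-β * Real.exp (-(β * t))) t := by
    have h0 : HasDerivAt (fun y : ℝ => -(β * y)) (-β) t := by
      have heq : (fun y : ℝ => -(β * y)) = fun y : ℝ => -β * y := by
        funext y; ring
      rw [heq]
      simpa using (hasDerivAt_id t).const_mul (-β)
    simpa [mul_comm] using h0.exp
  have hS := hasDerivAt_tsum_pow (mlc k C a)
    (fun r hr => summable_mlc k C a ha.le r hr) t
  have hprod := hexp.mul hS
  have hfe : (fun y : ℝ => Real.exp (-(β * y)) *
      (lam1 ^ k * lam * β * y / (lam1 + lam) ^ (k + 1)) *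
      ml3 ((k : ℝ) + 1) 1 2 (lam * β * y / (lam1 + lam)))
      = fun y : ℝ => Real.exp (-(β * y)) * ∑' n : ℕ, mlc k C a n * y ^ n :=
    funext hfun
  rw [hfe]
  refine hprod.congr_deriv (Eq.symm ?_)
  rw [tsum_mlc_eq k C a t ha.le, tsum_mlc_deriv_eq k C a t]
  have h1 : lam * β * t / (lam1 + lam) = a * t := by rw [hadef]; ring
  rw [h1]
  have hγ : ((k : ℝ) + 1) ≠ 0 := by positivity
  rw [hCdef]
  have hΛp : ((lam1 + lam) ^ (k + 1) : ℝ) ≠ 0 := by positivity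
  field_simp

private lemma ml3_one_one_one (z : ℝ) : ml3 1 1 1 z = Real.exp z := by
  have hz : Real.exp z = ∑' n : ℕ, z ^ n / (n.factorial : ℝ) := by
    rw [Real.exp_eq_exp_ℝ, NormedSpace.exp_eq_tsum_div]
  rw [hz]
  unfold ml3
  apply tsum_congr
  intro j
  have h3 : Real.Gamma (1 * (j : ℝ) + 1) = (j.factorial : ℝ) := by
    have h : 1 * (j : ℝ) + 1 = (j : ℝ) + 1 := by ring
    rw [h, Real.Gamma_nat_eq_factorial]
  have h4 : Real.Gamma (1 + (j : ℝ)) = (j.factorial : ℝ) := by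
    rw [add_comm]; exact Real.Gamma_nat_eq_factorial j
  rw [h3, h4, Real.Gamma_one]
  have hjf : ((j.factorial : ℝ)) ≠ 0 := by exact_mod_cast j.factorial_ne_zero
  field_simp

/-- differential relation between the pmf `p̂_k^E` of the Poisson
process time-changed by a compound Poisson-exponential subordinator with
interchanged parameters `(β, λ)`, and the pmf `p_k^I` of the same Poisson
process time-changed by the inverse compound Poisson-exponential process with
parameters `(λ, β)`. -/
theorem stmt11 (lam β lam1 : ℝ) (hlam : 0 < lam) (hβ : 0 < β) (hlam1 : 0 < lam1)
    (phat : ℕ → ℝ → ℝ) (pI : ℕ → ℝ → ℝ)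
    (hphat0 : ∀ t : ℝ, phat 0 t = Real.exp (-(β * lam1 * t / (lam1 + lam))))
    (hphatk : ∀ k : ℕ, 1 ≤ k → ∀ t : ℝ,
      phat k t = Real.exp (-(β * t)) *
        (lam1 ^ k * lam * β * t / (lam1 + lam) ^ (k + 1)) *
        ml3 ((k : ℝ) + 1) 1 2 (lam * β * t / (lam1 + lam)))
    (hpI : ∀ (k : ℕ) (t : ℝ),
      pI k t = Real.exp (-(β * t)) *
        (lam * lam1 ^ k * ((k : ℝ) + 1) / (lam1 + lam) ^ (k + 1)) *
        ml3 ((k : ℝ) + 1) 1 1 (lam * β * t / (lam1 + lam))) :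
    ∀ (k : ℕ) (t : ℝ), 0 < t →
      HasDerivAt (phat k)
        (-β * phat k t + β / ((k : ℝ) + 1) * pI k t) t := by
  intro k t ht
  cases k with
  | zero =>
    have hfun0 : phat 0 = fun y : ℝ => Real.exp (-(β * lam1 * y / (lam1 + lam))) :=
      funext hphat0
    rw [hphat0 t, hpI 0 t, hfun0]
    have hΛ : (0 : ℝ) < lam1 + lam := by positivity
    have hd : HasDerivAt (fun y : ℝ => Real.exp (-(β * lam1 * y / (lam1 + lam))))
        (Real.exp (-(β * lam1 * t / (lam1 + lam))) * (-(β * lam1 / (lam1 + lam)))) t := by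
      have h0 : HasDerivAt (fun y : ℝ => -(β * lam1 * y / (lam1 + lam)))
          (-(β * lam1 / (lam1 + lam))) t := by
        have heq : (fun y : ℝ => -(β * lam1 * y / (lam1 + lam)))
            = fun y : ℝ => (-(β * lam1 / (lam1 + lam))) * y := by
          funext y; ring
        rw [heq]
        simpa using (hasDerivAt_id t).const_mul (-(β * lam1 / (lam1 + lam)))
      exact h0.exp
    convert hd using 1
    simp only [Nat.cast_zero, pow_zero, zero_add, pow_one, one_mul, mul_one, div_one]
    rw [ml3_one_one_one]
    have hE : Real.exp (-(β * t)) * Real.exp (lam * β * t / (lam1 + lam))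
        = Real.exp (-(β * lam1 * t / (lam1 + lam))) := by
      rw [← Real.exp_add]
      congr 1
      field_simp
      ring
    rw [← hE]
    field_simp
    ring
  | succ k =>
    have hk : 1 ≤ k + 1 := Nat.succ_le_succ (Nat.zero_le k)
    have hfe : phat (k + 1) = fun y : ℝ => Real.exp (-(β * y)) *
        (lam1 ^ (k + 1) * lam * β * y / (lam1 + lam) ^ (k + 1 + 1)) *
        ml3 (((k + 1 : ℕ) : ℝ) + 1) 1 2 (lam * β * y / (lam1 + lam)) :=
      funext (hphatk (k + 1) hk)
    rw [hphatk (k + 1) hk t, hpI (k + 1) t, hfe]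
    exact aux_deriv lam β lam1 hlam hβ hlam1 (k + 1) t
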